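/- Let f,g∈ℋ with f(x)≥g(x) for all x∈[0,1] and f≠g. Let 0<v≤1 and define h:[0,v]→ℝ by h(x)=v·f(x/v) (the conjugate of f by the linear contraction x↦v·x fixing 0). If there exists δ>0 such that h(x)≤g(x) for all x∈(0,δ), then h'(0)=f'(0)=g'(0), and either v=1 and f=g=h, or h(x)<g(x) for all x∈(0,v]. -/

import Mathlib

open Set Polynomial

/-- The class ℋ: nonzero real polynomials of degree at most 3 with `f(0)=f(1)=0`,
nonnegative on `[0,1]`, and with exactly one critical point `c` in `[0,1]`. -/
structure HClass (f : Polynomial ℝ) (c : ℝ) : Prop where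
  deg : f.degree ≤ 3
  ne0 : f ≠ 0
  f0 : f.eval 0 = 0
  f1 : f.eval 1 = 0
  nonneg : ∀ x ∈ Set.Icc (0:ℝ) 1, 0 ≤ f.eval x
  hc : c ∈ Set.Icc (0:ℝ) 1
  crit : f.derivative.eval c = 0
  uniq : ∀ y ∈ Set.Icc (0:ℝ) 1, f.derivative.eval y = 0 → y = c

lemma aux_slope (q : ℝ → ℝ) (L δ : ℝ) (hq : HasDerivAt q L 0) (h0 : q 0 = 0)
    (hδ : 0 < δ) (hpos : ∀ x ∈ Set.Ioo (0:ℝ) δ, 0 ≤ q x) : 0 ≤ L := by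
  have h1 : HasDerivWithinAt q L (Set.Ioi 0) 0 := hq.hasDerivWithinAt
  rw [hasDerivWithinAt_iff_tendsto_slope] at h1
  have hs : Set.Ioi (0:ℝ) \ {0} = Set.Ioi 0 :=
    Set.diff_singleton_eq_self (by simp)
  rw [hs] at h1
  refine ge_of_tendsto h1 ?_
  filter_upwards [Ioo_mem_nhdsGT_of_mem ⟨le_refl 0, hδ⟩] with x hx
  have hq0 := hpos x hx
  rw [slope_def_field, h0]
  have : 0 < x - 0 := by simpa using hx.1
  exact div_nonneg (by simpa using hq0) this.le

lemma aux_lin (A B δ : ℝ) (hδ : 0 < δ)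
    (hp : ∀ x ∈ Set.Ioo (0:ℝ) δ, 0 ≤ A + B * x) : 0 ≤ A := by
  have ht : Filter.Tendsto (fun x : ℝ => A + B * x) (nhdsWithin 0 (Set.Ioi 0)) (nhds A) := by
    have hc : Continuous fun x : ℝ => A + B * x := by continuity
    simpa using (hc.tendsto 0).mono_left nhdsWithin_le_nhds
  exact ge_of_tendsto ht (by
    filter_upwards [Ioo_mem_nhdsGT_of_mem ⟨le_refl 0, hδ⟩] with x hx using hp x hx)

lemma aux_eval (p : Polynomial ℝ) (hd : p.degree ≤ 3) (h0 : p.eval 0 = 0) (x : ℝ) :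
    p.eval x = p.coeff 1 * x + p.coeff 2 * x^2 + p.coeff 3 * x^3 := by
  have hnd : p.natDegree < 4 :=
    lt_of_le_of_lt (Polynomial.natDegree_le_iff_degree_le.mpr hd) (by norm_num)
  have hc0 : p.coeff 0 = 0 := by rwa [Polynomial.coeff_zero_eq_eval_zero]
  rw [Polynomial.eval_eq_sum_range' hnd]
  simp [Finset.sum_range_succ, hc0]

lemma aux_deriv0 (p : Polynomial ℝ) : p.derivative.eval 0 = p.coeff 1 := by
  rw [← Polynomial.coeff_zero_eq_eval_zero, Polynomial.coeff_derivative]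
  simp

theorem stmt13 (f g : Polynomial ℝ) (cf cg : ℝ) (hf : HClass f cf) (hg : HClass g cg)
    (hge : ∀ x ∈ Set.Icc (0:ℝ) 1, g.eval x ≤ f.eval x) (hfg : f ≠ g)
    (v : ℝ) (hv0 : 0 < v) (hv1 : v ≤ 1)
    (h : ℝ → ℝ) (hh : h = fun x => v * f.eval (x / v))
    (hle : ∃ δ > 0, ∀ x ∈ Set.Ioo (0:ℝ) δ, h x ≤ g.eval x) :
    deriv h 0 = f.derivative.eval 0 ∧ f.derivative.eval 0 = g.derivative.eval 0 ∧
      ((v = 1 ∧ f = g ∧ (∀ x, h x = f.eval x)) ∨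
        (∀ x ∈ Set.Ioc (0:ℝ) v, h x < g.eval x)) := by
  obtain ⟨δ, hδ, hleδ⟩ := hle
  have hvne : v ≠ 0 := hv0.ne'
  set c1 := f.coeff 1 with hc1def
  set c2 := f.coeff 2 with hc2def
  set c3 := f.coeff 3 with hc3def
  set d1 := g.coeff 1 with hd1def
  set d2 := g.coeff 2 with hd2def
  set d3 := g.coeff 3 with hd3def
  have hfe : ∀ x : ℝ, f.eval x = c1 * x + c2 * x^2 + c3 * x^3 :=
    aux_eval f hf.deg hf.f0
  have hgev : ∀ x : ℝ, g.eval x = d1 * x + d2 * x^2 + d3 * x^3 :=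
    aux_eval g hg.deg hg.f0
  have hcs : c1 + c2 + c3 = 0 := by have := hfe 1; rw [hf.f1] at this; nlinarith [this]
  have hds : d1 + d2 + d3 = 0 := by have := hgev 1; rw [hg.f1] at this; nlinarith [this]
  have hc1d : f.derivative.eval 0 = c1 := aux_deriv0 f
  have hd1d : g.derivative.eval 0 = d1 := aux_deriv0 g
  -- derivative of h at 0
  have hDh : HasDerivAt h c1 0 := by
    have h1 : HasDerivAt (fun x : ℝ => x / v) (1 / v) 0 := by
      simpa using (hasDerivAt_id (0:ℝ)).div_const v
    have h2 : HasDerivAt (fun x : ℝ => f.eval (x / v))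
        (f.derivative.eval ((0:ℝ) / v) * (1 / v)) 0 :=
      by exact (f.hasDerivAt ((0:ℝ)/v)).comp 0 h1
    have h3 := h2.const_mul v
    have e : v * (f.derivative.eval ((0:ℝ) / v) * (1 / v)) = c1 := by
      rw [zero_div, hc1d]
      field_simp
    rw [hh, ← e]
    exact h3
  have hh0 : h 0 = 0 := by rw [hh]; simp [hf.f0]
  -- first derivative equality
  have hle1 : d1 ≤ c1 := by
    have := aux_slope (fun x => f.eval x - g.eval x) (c1 - d1) 1
      (by have := (f.hasDerivAt 0).sub (g.hasDerivAt 0); rw [hc1d, hd1d] at this; exact this)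
      (by simp [hf.f0, hg.f0]) one_pos
      (fun x hx => sub_nonneg.mpr (hge x ⟨hx.1.le, hx.2.le⟩))
    linarith
  have hle2 : c1 ≤ d1 := by
    have := aux_slope (fun x => g.eval x - h x) (d1 - c1) δ
      (by have := (g.hasDerivAt 0).sub hDh; rw [hd1d] at this; exact this)
      (by simp [hg.f0, hh0]) hδ
      (fun x hx => sub_nonneg.mpr (hleδ x hx))
    linarith
  have hc1d1 : c1 = d1 := le_antisymm hle2 hle1
  -- v < 1
  have hvlt : v < 1 := by
    rcases lt_or_eq_of_le hv1 with h' | h'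
    · exact h'
    · exfalso
      apply hfg
      apply Polynomial.eq_of_infinite_eval_eq
      refine Set.Infinite.mono ?_ (Set.Ioo_infinite (lt_min hδ one_pos))
      intro x hx
      have hx1 : x ∈ Set.Ioo (0:ℝ) δ := ⟨hx.1, lt_of_lt_of_le hx.2 (min_le_left _ _)⟩
      have hx2 : x ∈ Set.Icc (0:ℝ) 1 := ⟨hx.1.le, (lt_of_lt_of_le hx.2 (min_le_right _ _)).le⟩
      have e1 := hleδ x hx1
      have e2 := hge x hx2
      have hxf : h x = f.eval x := by simp only [hh, h', one_mul, div_one]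
      rw [hxf] at e1
      exact le_antisymm e1 e2
  -- quadratic/cubic coefficients of g - h
  obtain ⟨A, hAdef⟩ : ∃ a : ℝ, a = d2 - c2 / v := ⟨_, rfl⟩
  obtain ⟨B, hBdef⟩ : ∃ b : ℝ, b = d3 - c3 / v ^ 2 := ⟨_, rfl⟩
  have hE : ∀ x : ℝ, g.eval x - h x = x ^ 2 * (A + B * x) := by
    intro x
    rw [hh]
    simp only []
    rw [hgev x, hfe (x / v), hc1d1, hAdef, hBdef]
    field_simp
    ring
  have hA : 0 ≤ A := by
    apply aux_lin A B δ hδ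
    intro x hx
    have h1 := hleδ x hx
    have h2 : 0 ≤ x ^ 2 * (A + B * x) := by rw [← hE x]; linarith
    have hx2 : 0 < x ^ 2 := pow_pos hx.1 2
    nlinarith
  have hhv : h v = 0 := by rw [hh]; simp [div_self hvne, hf.f1]
  have hgv : 0 < g.eval v := by
    rcases lt_or_eq_of_le (hg.nonneg v ⟨hv0.le, hv1⟩) with h' | h'
    · exact h'
    · exfalso
      have e2 : d1 * v + d2 * v ^ 2 + d3 * v ^ 3 = 0 := by rw [← hgev v, ← h']
      have e3 : d1 + d2 * v + d3 * v ^ 2 = 0 := by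
        have hvv : v * (d1 + d2 * v + d3 * v ^ 2) = 0 := by linear_combination e2
        exact (mul_eq_zero.mp hvv).resolve_left hvne
      have e4 : d2 + (1 + v) * d3 = 0 := by
        have hne : (1 : ℝ) - v ≠ 0 := sub_ne_zero.mpr hvlt.ne'
        have hvv : (1 - v) * (d2 + (1 + v) * d3) = 0 := by linear_combination hds - e3
        exact (mul_eq_zero.mp hvv).resolve_left hne
      have e5 : d1 = v * d3 := by linear_combination hds - e4
      have hn1 := hg.nonneg (v / 2) ⟨by linarith, by linarith⟩
      have hn2 := hg.nonneg ((1 + v) / 2) ⟨by linarith, by linarith⟩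
      rw [hgev] at hn1 hn2
      have e4' : d2 = -(1 + v) * d3 := by linarith
      rw [e5, e4'] at hn1 hn2
      have hd3a : 0 ≤ d3 := by
        nlinarith [hn1, mul_pos (mul_pos hv0 hv0) (by linarith : (0:ℝ) < 2 - v)]
      have hd3b : d3 ≤ 0 := by
        by_contra hcon
        push_neg at hcon
        have hpos : 0 < d3 * ((1 + v) / 2) * ((1 - v) / 2) ^ 2 :=
          mul_pos (mul_pos hcon (by linarith)) (pow_pos (by linarith) 2)
        have heq : v * d3 * ((1 + v) / 2) + -(1 + v) * d3 * ((1 + v) / 2) ^ 2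
            + d3 * ((1 + v) / 2) ^ 3 = -(d3 * ((1 + v) / 2) * ((1 - v) / 2) ^ 2) := by
          ring
        linarith [hn2, heq, hpos]
      have hd3 : d3 = 0 := le_antisymm hd3b hd3a
      apply hg.ne0
      have h1c : d1 = 0 := by rw [e5, hd3, mul_zero]
      have h2c : d2 = 0 := by rw [e4', hd3, mul_zero]
      apply Polynomial.ext
      intro n
      rw [Polynomial.coeff_zero]
      match n with
      | 0 => rw [Polynomial.coeff_zero_eq_eval_zero, hg.f0]
      | 1 => exact h1c
      | 2 => exact h2c
      | 3 => exact hd3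
      | (n + 4) =>
        exact Polynomial.coeff_eq_zero_of_degree_lt
          (lt_of_le_of_lt hg.deg (by exact_mod_cast (by omega : 3 < n + 4)))
  refine ⟨hDh.deriv.trans hc1d.symm, by rw [hc1d, hd1d, hc1d1], Or.inr ?_⟩
  intro x hx
  have hEx := hE x
  have hEv := hE v
  rw [hhv, sub_zero] at hEv
  have hABv : 0 < A + B * v := by
    by_contra hcon
    push_neg at hcon
    have h3 := mul_nonneg (sq_nonneg v) (neg_nonneg.mpr hcon)
    linarith
  have hABx : 0 < A + B * x := by
    by_contra hcon
    push_neg at hcon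
    have t1 : 0 ≤ (v - x) * A := mul_nonneg (by linarith [hx.2]) hA
    have t2 : 0 < x * (A + B * v) := mul_pos hx.1 hABv
    have heq : v * (A + B * x) = (v - x) * A + x * (A + B * v) := by ring
    have t3 := mul_nonneg hv0.le (neg_nonneg.mpr hcon)
    linarith
  have t4 : 0 < x ^ 2 * (A + B * x) := mul_pos (pow_pos hx.1 2) hABx
  linarith [hEx, t4]
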